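/- arXiv:0806.3452 — 4 statements merged into one kernel-verified Lean document; each statement's English description precedes it below -/
import Mathlib

section
/- Let ω = e^{πi/3} and let x = a + bω ∈ ℤ[ω] with a, b ∈ ℤ. If 2ab + b² = ±4, then x² = -4 + 4ω or x² = -4ω. -/
noncomputable def omega : ℂ := Complex.exp (Real.pi * Complex.I / 3)

lemma omega_sq : omega ^ 2 = omega - 1 := by
  have h1 : omega = Complex.cos (Real.pi / 3) + Complex.sin (Real.pi / 3) * Complex.I := by
    rw [omega, ← Complex.exp_mul_I]
    ring_nf
  have hc : Complex.cos (Real.pi / 3) = 1 / 2 := by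
    rw [show ((Real.pi : ℂ) / 3) = ((Real.pi / 3 : ℝ) : ℂ) by push_cast; ring,
      ← Complex.ofReal_cos, Real.cos_pi_div_three]
    norm_num
  have hs : Complex.sin (Real.pi / 3) = (Real.sqrt 3 : ℝ) / 2 := by
    rw [show ((Real.pi : ℂ) / 3) = ((Real.pi / 3 : ℝ) : ℂ) by push_cast; ring,
      ← Complex.ofReal_sin, Real.sin_pi_div_three]
    push_cast; ring
  have h3 : ((Real.sqrt 3 : ℝ) : ℂ) ^ 2 = 3 := by
    norm_cast
    rw [Real.sq_sqrt] <;> norm_num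
  rw [h1, hc, hs]
  ring_nf
  rw [Complex.I_sq]
  linear_combination (-(1:ℂ)/4) * h3

theorem stmt_3 (a b : ℤ) (h : 2*a*b + b^2 = 4 ∨ 2*a*b + b^2 = -4) :
    ((a : ℂ) + b * omega)^2 = -4 + 4*omega ∨ ((a : ℂ) + b * omega)^2 = -4*omega := by
  rcases Int.even_or_odd b with ⟨c, hc⟩ | ⟨c, hc⟩
  · subst hc
    have hc1 : c * (a + c) = 1 ∨ c * (a + c) = -1 := by
      rcases h with h | h
      · left
        have h4 : (4:ℤ) * (c * (a + c)) = 4 * 1 := by linear_combination h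
        exact mul_left_cancel₀ (by norm_num) h4
      · right
        have h4 : (4:ℤ) * (c * (a + c)) = 4 * (-1) := by linear_combination h
        exact mul_left_cancel₀ (by norm_num) h4
    have hc2 : (c = 1 ∧ a = 0) ∨ (c = -1 ∧ a = 0) ∨ (c = 1 ∧ a = -2) ∨ (c = -1 ∧ a = 2) := by
      rcases hc1 with h1 | h1
      · rcases Int.mul_eq_one_iff_eq_one_or_neg_one.mp h1 with ⟨e1, e2⟩ | ⟨e1, e2⟩
        · left; constructor <;> omega
        · right; left; constructor <;> omega
      · have h1' : c * (-(a + c)) = 1 := by linear_combination -h1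
        rcases Int.mul_eq_one_iff_eq_one_or_neg_one.mp h1' with ⟨e1, e2⟩ | ⟨e1, e2⟩
        · right; right; left; constructor <;> omega
        · right; right; right; constructor <;> omega
    rcases hc2 with ⟨e1, e2⟩ | ⟨e1, e2⟩ | ⟨e1, e2⟩ | ⟨e1, e2⟩ <;> subst e1 <;> subst e2 <;>
        [left; left; right; right] <;> push_cast <;> linear_combination (4:ℂ) * omega_sq
  · exfalso
    have hk : 2*a*b + b^2 = 2*(2*a*c + a + 2*c*c + 2*c) + 1 := by subst hc; ring
    rcases h with h | h <;> omega
end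

section
/- Suppose x ∈ ℤ[ω] (ω = e^{πi/3}) and x² = ω^{n-m} + ω^m + 4 for some n ∈ {1,2,3,4,5} and m ∈ {0,1,2,4,5}. Then x² = 4, i.e., x = ±2. -/
lemma omega_eq : omega = Complex.ofReal (1/2) + Complex.ofReal (Real.sqrt 3 / 2) * Complex.I := by
  unfold omega
  rw [show (Real.pi : ℂ) * Complex.I / 3 = (Real.pi/3 : ℝ) * Complex.I by push_cast; ring,
    Complex.exp_mul_I, ← Complex.ofReal_cos, ← Complex.ofReal_sin,
    Real.cos_pi_div_three, Real.sin_pi_div_three]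

lemma omega_re : omega.re = 1/2 := by rw [omega_eq]; simp

lemma omega_im : omega.im = Real.sqrt 3 / 2 := by rw [omega_eq]; simp

lemma pw3 : omega ^ 3 = -1 := by linear_combination (1 + omega) * omega_sq
lemma pw4 : omega ^ 4 = -omega := by linear_combination (omega + omega^2) * omega_sq
lemma pw5 : omega ^ 5 = 1 - omega := by linear_combination (-1 + omega^2 + omega^3) * omega_sq

lemma zp0 : omega ^ (0:ℤ) = (1:ℂ) := zpow_zero _
lemma zp1 : omega ^ (1:ℤ) = omega := zpow_one _
lemma zp2 : omega ^ (2:ℤ) = omega - 1 := by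
  rw [show (2:ℤ) = ((2:ℕ):ℤ) from rfl, zpow_natCast]; exact omega_sq
lemma zp3 : omega ^ (3:ℤ) = (-1:ℂ) := by
  rw [show (3:ℤ) = ((3:ℕ):ℤ) from rfl, zpow_natCast]; exact pw3
lemma zp4 : omega ^ (4:ℤ) = -omega := by
  rw [show (4:ℤ) = ((4:ℕ):ℤ) from rfl, zpow_natCast]; exact pw4
lemma zp5 : omega ^ (5:ℤ) = 1 - omega := by
  rw [show (5:ℤ) = ((5:ℕ):ℤ) from rfl, zpow_natCast]; exact pw5
lemma zpn1 : omega ^ (-1:ℤ) = 1 - omega := by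
  rw [show (-1:ℤ) = -((1:ℕ):ℤ) from rfl, zpow_neg, zpow_natCast, pow_one]
  exact inv_eq_of_mul_eq_one_right (by linear_combination (-1:ℂ) * omega_sq)
lemma zpn2 : omega ^ (-2:ℤ) = -omega := by
  rw [show (-2:ℤ) = -((2:ℕ):ℤ) from rfl, zpow_neg, zpow_natCast]
  exact inv_eq_of_mul_eq_one_right (by linear_combination (-1 - omega) * omega_sq)
lemma zpn3 : omega ^ (-3:ℤ) = (-1:ℂ) := by
  rw [show (-3:ℤ) = -((3:ℕ):ℤ) from rfl, zpow_neg, zpow_natCast]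
  exact inv_eq_of_mul_eq_one_right (by linear_combination (-1 - omega) * omega_sq)
lemma zpn4 : omega ^ (-4:ℤ) = omega - 1 := by
  rw [show (-4:ℤ) = -((4:ℕ):ℤ) from rfl, zpow_neg, zpow_natCast]
  exact inv_eq_of_mul_eq_one_right (by linear_combination (-1 - omega + omega^3) * omega_sq)

lemma indep (u v : ℤ) (h : (u:ℂ) + v * omega = 0) : u = 0 ∧ v = 0 := by
  have him := congrArg Complex.im h
  have hre := congrArg Complex.re h
  simp [Complex.add_im, Complex.add_re, Complex.mul_im, Complex.mul_re,
    omega_re, omega_im] at him hre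
  subst him
  refine ⟨?_, rfl⟩
  have : (u:ℝ) = 0 := by push_cast at hre; linarith
  exact_mod_cast this

lemma extract (a b p q : ℤ) (h : ((a:ℂ) + b * omega)^2 = p + q * omega) :
    a^2 - b^2 = p ∧ 2*a*b + b^2 = q := by
  have key : ((a^2 - b^2 - p : ℤ) : ℂ) + ((2*a*b + b^2 - q : ℤ):ℂ) * omega = 0 := by
    push_cast
    linear_combination h - (b:ℂ)^2 * omega_sq
  obtain ⟨h1, h2⟩ := indep _ _ key
  omega

lemma bad_case (a b p q : ℤ) (e1 : a^2 - b^2 = p) (e2 : 2*a*b + b^2 = q)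
    (hb36 : p^2 + p*q + q^2 ≤ 36)
    (hK : ∀ N : ℤ, 0 ≤ N → N ≤ 6 → N^2 ≠ p^2 + p*q + q^2) : False := by
  have hN : (a^2 + a*b + b^2)^2 = p^2 + p*q + q^2 := by
    linear_combination (a^2 - b^2 + p + 2*a*b + b^2) * e1 + (p + 2*a*b + b^2 + q) * e2
  have h0 : 0 ≤ a^2 + a*b + b^2 := by nlinarith [sq_nonneg (2*a+b), sq_nonneg b]
  have h6 : a^2 + a*b + b^2 ≤ 6 := by nlinarith [hN, hb36, h0, sq_nonneg (a^2 + a*b + b^2 - 6)]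
  exact hK _ h0 h6 hN

lemma good_case (a b : ℤ) (e1 : a^2 - b^2 = 4) (e2 : 2*a*b + b^2 = 0) :
    b = 0 ∧ (a = 2 ∨ a = -2) := by
  have hb : b = 0 := by
    rcases mul_eq_zero.1 (show b * (2*a + b) = 0 by linear_combination e2) with h | h
    · exact h
    · exfalso; nlinarith [e1, sq_nonneg a]
  subst hb
  refine ⟨rfl, ?_⟩
  have h4 : (a - 2) * (a + 2) = 0 := by linear_combination e1
  rcases mul_eq_zero.1 h4 with h | h
  · left; omega
  · right; omega

theorem stmt_8 (x : ℂ) (hx : ∃ a b : ℤ, x = a + b * omega)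
    (h : ∃ n m : ℤ, n ∈ ({1, 2, 3, 4, 5} : Set ℤ) ∧ m ∈ ({0, 1, 2, 4, 5} : Set ℤ) ∧
      x^2 = omega ^ (n - m) + omega ^ m + 4) :
    x^2 = 4 ∧ (x = 2 ∨ x = -2) := by
  obtain ⟨a, b, hab⟩ := hx
  obtain ⟨n, m, hn, hm, h⟩ := h
  simp only [Set.mem_insert_iff, Set.mem_singleton_iff] at hn hm
  rcases hn with rfl | rfl | rfl | rfl | rfl <;> rcases hm with rfl | rfl | rfl | rfl | rfl
  · rw [show ((1:ℤ) - 0) = (1:ℤ) by norm_num] at h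
    simp only [zp1, zp0] at h
    have h' : x ^ 2 = ((5:ℤ):ℂ) + ((1:ℤ):ℂ) * omega := by rw [h]; push_cast; ring
    obtain ⟨e1, e2⟩ := extract a b 5 (1) (by rw [← hab]; exact h')
    exact absurd (bad_case a b 5 (1) e1 e2 (by norm_num)
      (by intro N h0 h6; interval_cases N <;> norm_num)) (by simp)
  · rw [show ((1:ℤ) - 1) = (0:ℤ) by norm_num] at h
    simp only [zp0, zp1] at h
    have h' : x ^ 2 = ((5:ℤ):ℂ) + ((1:ℤ):ℂ) * omega := by rw [h]; push_cast; ring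
    obtain ⟨e1, e2⟩ := extract a b 5 (1) (by rw [← hab]; exact h')
    exact absurd (bad_case a b 5 (1) e1 e2 (by norm_num)
      (by intro N h0 h6; interval_cases N <;> norm_num)) (by simp)
  · rw [show ((1:ℤ) - 2) = (-1:ℤ) by norm_num] at h
    simp only [zpn1, zp2] at h
    have h' : x ^ 2 = ((4:ℤ):ℂ) + ((0:ℤ):ℂ) * omega := by rw [h]; push_cast; ring
    obtain ⟨e1, e2⟩ := extract a b 4 (0) (by rw [← hab]; exact h')
    obtain ⟨hb, ha⟩ := good_case a b e1 e2
    subst hb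
    refine ⟨by rw [h']; norm_num, ?_⟩
    rcases ha with rfl | rfl
    · left; rw [hab]; push_cast; ring
    · right; rw [hab]; push_cast; ring
  · rw [show ((1:ℤ) - 4) = (-3:ℤ) by norm_num] at h
    simp only [zpn3, zp4] at h
    have h' : x ^ 2 = ((3:ℤ):ℂ) + ((-1:ℤ):ℂ) * omega := by rw [h]; push_cast; ring
    obtain ⟨e1, e2⟩ := extract a b 3 (-1) (by rw [← hab]; exact h')
    exact absurd (bad_case a b 3 (-1) e1 e2 (by norm_num)
      (by intro N h0 h6; interval_cases N <;> norm_num)) (by simp)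
  · rw [show ((1:ℤ) - 5) = (-4:ℤ) by norm_num] at h
    simp only [zpn4, zp5] at h
    have h' : x ^ 2 = ((4:ℤ):ℂ) + ((0:ℤ):ℂ) * omega := by rw [h]; push_cast; ring
    obtain ⟨e1, e2⟩ := extract a b 4 (0) (by rw [← hab]; exact h')
    obtain ⟨hb, ha⟩ := good_case a b e1 e2
    subst hb
    refine ⟨by rw [h']; norm_num, ?_⟩
    rcases ha with rfl | rfl
    · left; rw [hab]; push_cast; ring
    · right; rw [hab]; push_cast; ring
  · rw [show ((2:ℤ) - 0) = (2:ℤ) by norm_num] at h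
    simp only [zp2, zp0] at h
    have h' : x ^ 2 = ((4:ℤ):ℂ) + ((1:ℤ):ℂ) * omega := by rw [h]; push_cast; ring
    obtain ⟨e1, e2⟩ := extract a b 4 (1) (by rw [← hab]; exact h')
    exact absurd (bad_case a b 4 (1) e1 e2 (by norm_num)
      (by intro N h0 h6; interval_cases N <;> norm_num)) (by simp)
  · rw [show ((2:ℤ) - 1) = (1:ℤ) by norm_num] at h
    simp only [zp1, zp1] at h
    have h' : x ^ 2 = ((4:ℤ):ℂ) + ((2:ℤ):ℂ) * omega := by rw [h]; push_cast; ring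
    obtain ⟨e1, e2⟩ := extract a b 4 (2) (by rw [← hab]; exact h')
    exact absurd (bad_case a b 4 (2) e1 e2 (by norm_num)
      (by intro N h0 h6; interval_cases N <;> norm_num)) (by simp)
  · rw [show ((2:ℤ) - 2) = (0:ℤ) by norm_num] at h
    simp only [zp0, zp2] at h
    have h' : x ^ 2 = ((4:ℤ):ℂ) + ((1:ℤ):ℂ) * omega := by rw [h]; push_cast; ring
    obtain ⟨e1, e2⟩ := extract a b 4 (1) (by rw [← hab]; exact h')
    exact absurd (bad_case a b 4 (1) e1 e2 (by norm_num)
      (by intro N h0 h6; interval_cases N <;> norm_num)) (by simp)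
  · rw [show ((2:ℤ) - 4) = (-2:ℤ) by norm_num] at h
    simp only [zpn2, zp4] at h
    have h' : x ^ 2 = ((4:ℤ):ℂ) + ((-2:ℤ):ℂ) * omega := by rw [h]; push_cast; ring
    obtain ⟨e1, e2⟩ := extract a b 4 (-2) (by rw [← hab]; exact h')
    exact absurd (bad_case a b 4 (-2) e1 e2 (by norm_num)
      (by intro N h0 h6; interval_cases N <;> norm_num)) (by simp)
  · rw [show ((2:ℤ) - 5) = (-3:ℤ) by norm_num] at h
    simp only [zpn3, zp5] at h
    have h' : x ^ 2 = ((4:ℤ):ℂ) + ((-1:ℤ):ℂ) * omega := by rw [h]; push_cast; ring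
    obtain ⟨e1, e2⟩ := extract a b 4 (-1) (by rw [← hab]; exact h')
    exact absurd (bad_case a b 4 (-1) e1 e2 (by norm_num)
      (by intro N h0 h6; interval_cases N <;> norm_num)) (by simp)
  · rw [show ((3:ℤ) - 0) = (3:ℤ) by norm_num] at h
    simp only [zp3, zp0] at h
    have h' : x ^ 2 = ((4:ℤ):ℂ) + ((0:ℤ):ℂ) * omega := by rw [h]; push_cast; ring
    obtain ⟨e1, e2⟩ := extract a b 4 (0) (by rw [← hab]; exact h')
    obtain ⟨hb, ha⟩ := good_case a b e1 e2
    subst hb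
    refine ⟨by rw [h']; norm_num, ?_⟩
    rcases ha with rfl | rfl
    · left; rw [hab]; push_cast; ring
    · right; rw [hab]; push_cast; ring
  · rw [show ((3:ℤ) - 1) = (2:ℤ) by norm_num] at h
    simp only [zp2, zp1] at h
    have h' : x ^ 2 = ((3:ℤ):ℂ) + ((2:ℤ):ℂ) * omega := by rw [h]; push_cast; ring
    obtain ⟨e1, e2⟩ := extract a b 3 (2) (by rw [← hab]; exact h')
    exact absurd (bad_case a b 3 (2) e1 e2 (by norm_num)
      (by intro N h0 h6; interval_cases N <;> norm_num)) (by simp)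
  · rw [show ((3:ℤ) - 2) = (1:ℤ) by norm_num] at h
    simp only [zp1, zp2] at h
    have h' : x ^ 2 = ((3:ℤ):ℂ) + ((2:ℤ):ℂ) * omega := by rw [h]; push_cast; ring
    obtain ⟨e1, e2⟩ := extract a b 3 (2) (by rw [← hab]; exact h')
    exact absurd (bad_case a b 3 (2) e1 e2 (by norm_num)
      (by intro N h0 h6; interval_cases N <;> norm_num)) (by simp)
  · rw [show ((3:ℤ) - 4) = (-1:ℤ) by norm_num] at h
    simp only [zpn1, zp4] at h
    have h' : x ^ 2 = ((5:ℤ):ℂ) + ((-2:ℤ):ℂ) * omega := by rw [h]; push_cast; ring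
    obtain ⟨e1, e2⟩ := extract a b 5 (-2) (by rw [← hab]; exact h')
    exact absurd (bad_case a b 5 (-2) e1 e2 (by norm_num)
      (by intro N h0 h6; interval_cases N <;> norm_num)) (by simp)
  · rw [show ((3:ℤ) - 5) = (-2:ℤ) by norm_num] at h
    simp only [zpn2, zp5] at h
    have h' : x ^ 2 = ((5:ℤ):ℂ) + ((-2:ℤ):ℂ) * omega := by rw [h]; push_cast; ring
    obtain ⟨e1, e2⟩ := extract a b 5 (-2) (by rw [← hab]; exact h')
    exact absurd (bad_case a b 5 (-2) e1 e2 (by norm_num)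
      (by intro N h0 h6; interval_cases N <;> norm_num)) (by simp)
  · rw [show ((4:ℤ) - 0) = (4:ℤ) by norm_num] at h
    simp only [zp4, zp0] at h
    have h' : x ^ 2 = ((5:ℤ):ℂ) + ((-1:ℤ):ℂ) * omega := by rw [h]; push_cast; ring
    obtain ⟨e1, e2⟩ := extract a b 5 (-1) (by rw [← hab]; exact h')
    exact absurd (bad_case a b 5 (-1) e1 e2 (by norm_num)
      (by intro N h0 h6; interval_cases N <;> norm_num)) (by simp)
  · rw [show ((4:ℤ) - 1) = (3:ℤ) by norm_num] at h
    simp only [zp3, zp1] at h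
    have h' : x ^ 2 = ((3:ℤ):ℂ) + ((1:ℤ):ℂ) * omega := by rw [h]; push_cast; ring
    obtain ⟨e1, e2⟩ := extract a b 3 (1) (by rw [← hab]; exact h')
    exact absurd (bad_case a b 3 (1) e1 e2 (by norm_num)
      (by intro N h0 h6; interval_cases N <;> norm_num)) (by simp)
  · rw [show ((4:ℤ) - 2) = (2:ℤ) by norm_num] at h
    simp only [zp2, zp2] at h
    have h' : x ^ 2 = ((2:ℤ):ℂ) + ((2:ℤ):ℂ) * omega := by rw [h]; push_cast; ring
    obtain ⟨e1, e2⟩ := extract a b 2 (2) (by rw [← hab]; exact h')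
    exact absurd (bad_case a b 2 (2) e1 e2 (by norm_num)
      (by intro N h0 h6; interval_cases N <;> norm_num)) (by simp)
  · rw [show ((4:ℤ) - 4) = (0:ℤ) by norm_num] at h
    simp only [zp0, zp4] at h
    have h' : x ^ 2 = ((5:ℤ):ℂ) + ((-1:ℤ):ℂ) * omega := by rw [h]; push_cast; ring
    obtain ⟨e1, e2⟩ := extract a b 5 (-1) (by rw [← hab]; exact h')
    exact absurd (bad_case a b 5 (-1) e1 e2 (by norm_num)
      (by intro N h0 h6; interval_cases N <;> norm_num)) (by simp)
  · rw [show ((4:ℤ) - 5) = (-1:ℤ) by norm_num] at h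
    simp only [zpn1, zp5] at h
    have h' : x ^ 2 = ((6:ℤ):ℂ) + ((-2:ℤ):ℂ) * omega := by rw [h]; push_cast; ring
    obtain ⟨e1, e2⟩ := extract a b 6 (-2) (by rw [← hab]; exact h')
    exact absurd (bad_case a b 6 (-2) e1 e2 (by norm_num)
      (by intro N h0 h6; interval_cases N <;> norm_num)) (by simp)
  · rw [show ((5:ℤ) - 0) = (5:ℤ) by norm_num] at h
    simp only [zp5, zp0] at h
    have h' : x ^ 2 = ((6:ℤ):ℂ) + ((-1:ℤ):ℂ) * omega := by rw [h]; push_cast; ring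
    obtain ⟨e1, e2⟩ := extract a b 6 (-1) (by rw [← hab]; exact h')
    exact absurd (bad_case a b 6 (-1) e1 e2 (by norm_num)
      (by intro N h0 h6; interval_cases N <;> norm_num)) (by simp)
  · rw [show ((5:ℤ) - 1) = (4:ℤ) by norm_num] at h
    simp only [zp4, zp1] at h
    have h' : x ^ 2 = ((4:ℤ):ℂ) + ((0:ℤ):ℂ) * omega := by rw [h]; push_cast; ring
    obtain ⟨e1, e2⟩ := extract a b 4 (0) (by rw [← hab]; exact h')
    obtain ⟨hb, ha⟩ := good_case a b e1 e2
    subst hb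
    refine ⟨by rw [h']; norm_num, ?_⟩
    rcases ha with rfl | rfl
    · left; rw [hab]; push_cast; ring
    · right; rw [hab]; push_cast; ring
  · rw [show ((5:ℤ) - 2) = (3:ℤ) by norm_num] at h
    simp only [zp3, zp2] at h
    have h' : x ^ 2 = ((2:ℤ):ℂ) + ((1:ℤ):ℂ) * omega := by rw [h]; push_cast; ring
    obtain ⟨e1, e2⟩ := extract a b 2 (1) (by rw [← hab]; exact h')
    exact absurd (bad_case a b 2 (1) e1 e2 (by norm_num)
      (by intro N h0 h6; interval_cases N <;> norm_num)) (by simp)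
  · rw [show ((5:ℤ) - 4) = (1:ℤ) by norm_num] at h
    simp only [zp1, zp4] at h
    have h' : x ^ 2 = ((4:ℤ):ℂ) + ((0:ℤ):ℂ) * omega := by rw [h]; push_cast; ring
    obtain ⟨e1, e2⟩ := extract a b 4 (0) (by rw [← hab]; exact h')
    obtain ⟨hb, ha⟩ := good_case a b e1 e2
    subst hb
    refine ⟨by rw [h']; norm_num, ?_⟩
    rcases ha with rfl | rfl
    · left; rw [hab]; push_cast; ring
    · right; rw [hab]; push_cast; ring
  · rw [show ((5:ℤ) - 5) = (0:ℤ) by norm_num] at h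
    simp only [zp0, zp5] at h
    have h' : x ^ 2 = ((6:ℤ):ℂ) + ((-1:ℤ):ℂ) * omega := by rw [h]; push_cast; ring
    obtain ⟨e1, e2⟩ := extract a b 6 (-1) (by rw [← hab]; exact h')
    exact absurd (bad_case a b 6 (-1) e1 e2 (by norm_num)
      (by intro N h0 h6; interval_cases N <;> norm_num)) (by simp)
end

section
/- Let θ = (1 + i√7)/2 and suppose x ∈ ℤ[θ] satisfies x² ∈ {4, 1+θ, 3+θ, 4+2θ, 4-2θ, 5-θ, 7-θ}. Then x² = 4, i.e., x = ±2. -/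
noncomputable def theta : ℂ := (1 + Complex.I * Real.sqrt 7) / 2

lemma theta_re : theta.re = 1/2 := by simp [theta, Complex.div_re]
lemma theta_im : theta.im = Real.sqrt 7 / 2 := by simp [theta, Complex.div_im]

lemma theta_sq : theta ^ 2 = theta - 2 := by
  have h7 : (Real.sqrt 7 : ℂ) ^ 2 = 7 := by
    norm_cast
    rw [Real.sq_sqrt] <;> norm_num
  unfold theta
  linear_combination ((Real.sqrt 7 : ℂ)^2/4) * Complex.I_sq - h7/4

lemma indep_s11 (m n p q : ℤ) (h : (m:ℂ) + n * theta = p + q * theta) : m = p ∧ n = q := by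
  have h7 : Real.sqrt 7 ≠ 0 := by positivity
  have him := congrArg Complex.im h
  have hre := congrArg Complex.re h
  simp only [Complex.add_im, Complex.add_re, Complex.mul_im, Complex.mul_re, theta_re, theta_im,
    Complex.intCast_im, Complex.intCast_re] at him hre
  have hnq : (n:ℝ) = q := by
    have : (n:ℝ) * (Real.sqrt 7/2) = q * (Real.sqrt 7/2) := by linarith
    have := mul_right_cancel₀ (by positivity : Real.sqrt 7/2 ≠ 0) this
    linarith
  have hn : n = q := by exact_mod_cast hnq
  refine ⟨?_, hn⟩
  rw [hnq] at hre
  exact_mod_cast (by linarith : (m:ℝ) = p)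

theorem stmt_11 (x : ℂ) (hx : ∃ a b : ℤ, x = a + b * theta)
    (h : x^2 ∈ ({4, 1+theta, 3+theta, 4+2*theta, 4-2*theta, 5-theta, 7-theta} : Set ℂ)) :
    x^2 = 4 ∧ (x = 2 ∨ x = -2) := by
  obtain ⟨a, b, rfl⟩ := hx
  have hsq : ((a:ℂ) + b * theta)^2 = ((a^2 - 2*b^2 : ℤ) : ℂ) + ((2*a*b + b^2 : ℤ) : ℂ) * theta := by
    push_cast
    linear_combination (b:ℂ)^2 * theta_sq
  simp only [Set.mem_insert_iff, Set.mem_singleton_iff] at h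
  rcases h with h | h | h | h | h | h | h
  all_goals rw [hsq] at h ⊢
  · -- x² = 4
    have h4 : ((4:ℤ):ℂ) + ((0:ℤ):ℂ) * theta = 4 := by push_cast; ring
    rw [← h4] at h
    obtain ⟨h1, h2⟩ := indep_s11 _ _ _ _ h
    have hb : b = 0 ∨ b = -2*a := by
      rcases mul_eq_zero.mp (show b * (2*a + b) = 0 by linarith) with h | h
      · left; exact h
      · right; omega
    rcases hb with rfl | rfl
    · have ha : a = 2 ∨ a = -2 := by
        have hz : (a-2)*(a+2) = 0 := by linear_combination h1
        rcases mul_eq_zero.mp hz with h' | h' <;> omega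
      refine ⟨by rw [h1, h2]; push_cast; ring, ?_⟩
      rcases ha with rfl | rfl
      · left; push_cast; ring
      · right; push_cast; ring
    · exfalso; nlinarith [sq_nonneg a]
  · exfalso
    have he : ((1:ℤ):ℂ) + ((1:ℤ):ℂ) * theta = 1 + theta := by push_cast; ring
    rw [← he] at h
    obtain ⟨h1, h2⟩ := indep_s11 _ _ _ _ h
    have hb : b * (2*a + b) = 1 := by linarith
    have : b = 1 ∨ b = -1 := Int.isUnit_iff.mp (IsUnit.of_mul_eq_one _ hb)
    rcases this with rfl | rfl <;> nlinarith
  · exfalso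
    have he : ((3:ℤ):ℂ) + ((1:ℤ):ℂ) * theta = 3 + theta := by push_cast; ring
    rw [← he] at h
    obtain ⟨h1, h2⟩ := indep_s11 _ _ _ _ h
    have hb : b * (2*a + b) = 1 := by linarith
    have : b = 1 ∨ b = -1 := Int.isUnit_iff.mp (IsUnit.of_mul_eq_one _ hb)
    rcases this with rfl | rfl <;> nlinarith
  · exfalso
    have he : ((4:ℤ):ℂ) + ((2:ℤ):ℂ) * theta = 4 + 2*theta := by push_cast; ring
    rw [← he] at h
    obtain ⟨h1, h2⟩ := indep_s11 _ _ _ _ h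
    have hb : b * (2*a + b) = 2 := by linarith
    rcases Int.even_or_odd b with ⟨k, hk⟩ | ⟨k, hk⟩
    · subst hk
      have h4 : 4 * (k * (a + k)) = 2 := by linear_combination hb
      omega
    · subst hk
      have hodd : Odd ((2*k+1) * (2*a + (2*k+1))) :=
        Odd.mul ⟨k, by ring⟩ ⟨a+k, by ring⟩
      rw [hb] at hodd
      obtain ⟨m, hm⟩ := hodd
      omega
  · exfalso
    have he : ((4:ℤ):ℂ) + ((-2:ℤ):ℂ) * theta = 4 - 2*theta := by push_cast; ring
    rw [← he] at h
    obtain ⟨h1, h2⟩ := indep_s11 _ _ _ _ h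
    have hb : b * (2*a + b) = -2 := by linarith
    rcases Int.even_or_odd b with ⟨k, hk⟩ | ⟨k, hk⟩
    · subst hk
      have h4 : 4 * (k * (a + k)) = -2 := by linear_combination hb
      omega
    · subst hk
      have hodd : Odd ((2*k+1) * (2*a + (2*k+1))) :=
        Odd.mul ⟨k, by ring⟩ ⟨a+k, by ring⟩
      rw [hb] at hodd
      obtain ⟨m, hm⟩ := hodd
      omega
  · exfalso
    have he : ((5:ℤ):ℂ) + ((-1:ℤ):ℂ) * theta = 5 - theta := by push_cast; ring
    rw [← he] at h
    obtain ⟨h1, h2⟩ := indep_s11 _ _ _ _ h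
    have hb : b * (2*a + b) = -1 := by linarith
    have : b = 1 ∨ b = -1 :=
      Int.isUnit_iff.mp (IsUnit.of_mul_eq_one _ (show b * (-(2*a+b)) = 1 by linear_combination -hb))
    rcases this with rfl | rfl <;> nlinarith
  · exfalso
    have he : ((7:ℤ):ℂ) + ((-1:ℤ):ℂ) * theta = 7 - theta := by push_cast; ring
    rw [← he] at h
    obtain ⟨h1, h2⟩ := indep_s11 _ _ _ _ h
    have hb : b * (2*a + b) = -1 := by linarith
    have : b = 1 ∨ b = -1 :=
      Int.isUnit_iff.mp (IsUnit.of_mul_eq_one _ (show b * (-(2*a+b)) = 1 by linear_combination -hb))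
    rcases this with rfl | rfl <;> nlinarith
end

section
/- In the figure-eight knot group G = ⟨a, b | a⁻¹bab⁻¹a = ba⁻¹bab⁻¹⟩, the three conjugate elements α = a⁻¹b², β = bαb⁻¹, and γ = b⁻¹αb generate G. -/
/-- The relator of the figure-eight knot group
`⟨a, b | a⁻¹bab⁻¹a = ba⁻¹bab⁻¹⟩` as an element of the free group on two
generators. -/
def fig8Rel : Set (FreeGroup (Fin 2)) :=
  { (FreeGroup.of 0)⁻¹ * FreeGroup.of 1 * FreeGroup.of 0 * (FreeGroup.of 1)⁻¹ * FreeGroup.of 0 *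
      (FreeGroup.of 1 * (FreeGroup.of 0)⁻¹ * FreeGroup.of 1 * FreeGroup.of 0 * (FreeGroup.of 1)⁻¹)⁻¹ }

/-- The figure-eight knot group. -/
def Fig8Group := PresentedGroup fig8Rel

instance : Group Fig8Group := by unfold Fig8Group; infer_instance

def fig8a : Fig8Group := PresentedGroup.of 0
def fig8b : Fig8Group := PresentedGroup.of 1

lemma fig8_rel :
    fig8a⁻¹ * fig8b * fig8a * fig8b⁻¹ * fig8a =
      fig8b * fig8a⁻¹ * fig8b * fig8a * fig8b⁻¹ := by
  have h : PresentedGroup.mk fig8Rel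
      ((FreeGroup.of 0)⁻¹ * FreeGroup.of 1 * FreeGroup.of 0 * (FreeGroup.of 1)⁻¹ * FreeGroup.of 0 *
        (FreeGroup.of 1 * (FreeGroup.of 0)⁻¹ * FreeGroup.of 1 * FreeGroup.of 0 *
          (FreeGroup.of 1)⁻¹)⁻¹) = 1 := by
    apply (QuotientGroup.eq_one_iff _).mpr
    exact Subgroup.subset_normalClosure rfl
  simp only [map_mul, map_inv] at h
  have h' := mul_eq_one_iff_eq_inv.mp h
  rw [inv_inv] at h'
  exact h'

theorem stmt_17 :
    Subgroup.closure
        ({fig8a⁻¹ * fig8b^2,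
          fig8b * (fig8a⁻¹ * fig8b^2) * fig8b⁻¹,
          fig8b⁻¹ * (fig8a⁻¹ * fig8b^2) * fig8b} : Set Fig8Group) = ⊤ := by
  set a := fig8a
  set b := fig8b
  set S : Set Fig8Group :=
    {a⁻¹ * b^2, b * (a⁻¹ * b^2) * b⁻¹, b⁻¹ * (a⁻¹ * b^2) * b} with hS
  have hα : a⁻¹ * b^2 ∈ Subgroup.closure S := Subgroup.subset_closure (by simp [hS])
  have hβ : b * (a⁻¹ * b^2) * b⁻¹ ∈ Subgroup.closure S := Subgroup.subset_closure (by simp [hS])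
  have hγ : b⁻¹ * (a⁻¹ * b^2) * b ∈ Subgroup.closure S := Subgroup.subset_closure (by simp [hS])
  have hrel : a * b * a⁻¹ * b * a * b⁻¹ * a⁻¹ = b * a * b⁻¹ := by
    have h2 : a * (a⁻¹ * b * a * b⁻¹ * a) * a⁻¹ = a * (b * a⁻¹ * b * a * b⁻¹) * a⁻¹ := by
      rw [fig8_rel]
    calc a * b * a⁻¹ * b * a * b⁻¹ * a⁻¹
        = a * (b * a⁻¹ * b * a * b⁻¹) * a⁻¹ := by group
      _ = a * (a⁻¹ * b * a * b⁻¹ * a) * a⁻¹ := h2.symm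
      _ = b * a * b⁻¹ := by group
  have hb : b ∈ Subgroup.closure S := by
    have key : b = (b * (a⁻¹ * b^2) * b⁻¹)⁻¹ * (a⁻¹ * b^2) * (b⁻¹ * (a⁻¹ * b^2) * b)⁻¹ *
        (a⁻¹ * b^2) * (b * (a⁻¹ * b^2) * b⁻¹)⁻¹ * ((a⁻¹ * b^2) * (a⁻¹ * b^2)) := by
      calc b = b⁻¹ * a * b⁻¹ * a⁻¹ * b⁻¹ * (b * a * b⁻¹) * b^2 * a⁻¹ * b^2 := by group
        _ = b⁻¹ * a * b⁻¹ * a⁻¹ * b⁻¹ * (a * b * a⁻¹ * b * a * b⁻¹ * a⁻¹) * b^2 * a⁻¹ * b^2 := by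
            rw [hrel]
        _ = (b * (a⁻¹ * b^2) * b⁻¹)⁻¹ * (a⁻¹ * b^2) * (b⁻¹ * (a⁻¹ * b^2) * b)⁻¹ *
            (a⁻¹ * b^2) * (b * (a⁻¹ * b^2) * b⁻¹)⁻¹ * ((a⁻¹ * b^2) * (a⁻¹ * b^2)) := by group
    rw [key]
    exact mul_mem (mul_mem (mul_mem (mul_mem (mul_mem (inv_mem hβ) hα) (inv_mem hγ)) hα)
      (inv_mem hβ)) (mul_mem hα hα)
  have ha : a ∈ Subgroup.closure S := by
    have key : a = b^2 * (a⁻¹ * b^2)⁻¹ := by group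
    rw [key]
    exact mul_mem (pow_mem hb 2) (inv_mem hα)
  rw [eq_top_iff]
  intro x _
  exact PresentedGroup.generated_by fig8Rel _ (fun j => by
    fin_cases j
    · exact ha
    · exact hb) x
end
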